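/- arXiv:1906.10259 — 2 statements merged into one kernel-verified Lean document; each statement's English description precedes it below -/
import Mathlib

section
/- Quadrangle condition at the origin: Let X ∈ V with h(X) = m+1 (m ≥ 1), and let Y, Z ∈ V be adjacent to X with h(Y) = h(Z) = m. Then there exists W ∈ V adjacent to both Y and Z with h(W) = m − 1. -/
open Finset

/-- The vertex set of the 1-skeleton of the Ã_n Coxeter complex:
integer vectors summing to zero with all pairwise coordinate differences divisible by n+1. -/
def inV (n : ℕ) (x : Fin (n+1) → ℤ) : Prop :=
  (∑ i, x i = 0) ∧ ∀ i j, ((n : ℤ) + 1) ∣ x i - x j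

/-- Maximum coordinate. -/
def maxC (n : ℕ) (x : Fin (n+1) → ℤ) : ℤ := univ.sup' univ_nonempty x

/-- Minimum coordinate. -/
def minC (n : ℕ) (x : Fin (n+1) → ℤ) : ℤ := univ.inf' univ_nonempty x

/-- An edge vector: coordinates sum to 0, pairwise differences divisible by n+1,
and max minus min equals n+1. -/
def isEdge (n : ℕ) (e : Fin (n+1) → ℤ) : Prop :=
  inV n e ∧ maxC n e - minC n e = (n : ℤ) + 1

/-- Height of a vertex: (max − min)/(n+1). -/
def height (n : ℕ) (x : Fin (n+1) → ℤ) : ℤ :=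
  (maxC n x - minC n x) / ((n : ℤ) + 1)

/-- The edge vector associated to a subset S: value n+1−|S| on S and −|S| off S. -/
def eVec (n : ℕ) (S : Finset (Fin (n+1))) : Fin (n+1) → ℤ :=
  fun i => if i ∈ S then (n : ℤ) + 1 - S.card else -(S.card : ℤ)

lemma inV_zero (n : ℕ) : inV n 0 := ⟨by simp, fun i j => by simp⟩

lemma maxC_neg (n : ℕ) (x : Fin (n+1) → ℤ) : maxC n (-x) = - minC n x := by
  unfold maxC minC
  apply le_antisymm
  · apply Finset.sup'_le
    intro i hi
    have h1 : univ.inf' univ_nonempty x ≤ x i := Finset.inf'_le _ hi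
    have h2 : (-x) i = -(x i) := rfl
    omega
  · obtain ⟨i, hi, h⟩ := Finset.exists_mem_eq_inf' (univ_nonempty) x
    rw [h]
    have h1 : (-x) i ≤ univ.sup' univ_nonempty (-x) := Finset.le_sup' (-x) hi
    have h2 : (-x) i = -(x i) := rfl
    omega

lemma minC_neg (n : ℕ) (x : Fin (n+1) → ℤ) : minC n (-x) = - maxC n x := by
  have := maxC_neg n (-x)
  rw [neg_neg] at this
  unfold maxC minC at *
  omega

lemma isEdge_neg {n : ℕ} {e : Fin (n+1) → ℤ} (h : isEdge n e) : isEdge n (-e) := by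
  obtain ⟨⟨h1, h2⟩, h3⟩ := h
  refine ⟨⟨by simp [h1], fun i j => by
    have h' : (-e) i - (-e) j = e j - e i := by
      simp only [Pi.neg_apply]; ring
    rw [h']; exact h2 j i⟩, ?_⟩
  rw [maxC_neg, minC_neg]
  omega

/-- The graph G on V with edge-vector adjacency. -/
def G (n : ℕ) : SimpleGraph {x : Fin (n+1) → ℤ // inV n x} where
  Adj x y := isEdge n (y.1 - x.1)
  symm := by
    constructor
    intro x y h
    have := isEdge_neg h
    rwa [neg_sub] at this
  loopless := by
    constructor
    intro x h
    obtain ⟨-, h3⟩ := h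
    rw [sub_self] at h3
    simp [maxC, minC] at h3
    omega

section Aux
variable {n : ℕ}

lemma aux_minC_le (x : Fin (n+1) → ℤ) (i : Fin (n+1)) : minC n x ≤ x i :=
  Finset.inf'_le _ (Finset.mem_univ i)

lemma aux_le_maxC (x : Fin (n+1) → ℤ) (i : Fin (n+1)) : x i ≤ maxC n x :=
  Finset.le_sup' _ (Finset.mem_univ i)

lemma aux_exists_maxC (x : Fin (n+1) → ℤ) : ∃ i, x i = maxC n x := by
  obtain ⟨i, -, h⟩ := Finset.exists_mem_eq_sup' univ_nonempty x
  exact ⟨i, h.symm⟩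

lemma aux_exists_minC (x : Fin (n+1) → ℤ) : ∃ i, x i = minC n x := by
  obtain ⟨i, -, h⟩ := Finset.exists_mem_eq_inf' univ_nonempty x
  exact ⟨i, h.symm⟩

lemma aux_maxC_eq {x : Fin (n+1) → ℤ} {b : ℤ} (h1 : ∀ i, x i ≤ b) (h2 : ∃ i, x i = b) :
    maxC n x = b := by
  obtain ⟨i, hi⟩ := h2
  exact le_antisymm (Finset.sup'_le _ _ fun j _ => h1 j) (hi ▸ aux_le_maxC x i)

lemma aux_minC_eq {x : Fin (n+1) → ℤ} {b : ℤ} (h1 : ∀ i, b ≤ x i) (h2 : ∃ i, x i = b) :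
    minC n x = b := by
  obtain ⟨i, hi⟩ := h2
  exact le_antisymm (hi ▸ aux_minC_le x i) (Finset.le_inf' _ _ fun j _ => h1 j)

lemma aux_inV_add {x y : Fin (n+1) → ℤ} (hx : inV n x) (hy : inV n y) : inV n (x + y) := by
  refine ⟨by simp [Finset.sum_add_distrib, hx.1, hy.1], fun i j => ?_⟩
  have : (x + y) i - (x + y) j = (x i - x j) + (y i - y j) := by simp [Pi.add_apply]; ring
  rw [this]
  exact dvd_add (hx.2 i j) (hy.2 i j)

lemma aux_inV_sub {x y : Fin (n+1) → ℤ} (hx : inV n x) (hy : inV n y) : inV n (x - y) := by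
  refine ⟨by simp [Finset.sum_sub_distrib, hx.1, hy.1], fun i j => ?_⟩
  have : (x - y) i - (x - y) j = (x i - x j) - (y i - y j) := by simp [Pi.sub_apply]; ring
  rw [this]
  exact dvd_sub (hx.2 i j) (hy.2 i j)

lemma aux_eVec_apply (S : Finset (Fin (n+1))) (i : Fin (n+1)) :
    eVec n S i = ((n:ℤ)+1) * (if i ∈ S then 1 else 0) - (S.card : ℤ) := by
  unfold eVec
  split_ifs <;> ring

lemma aux_inV_eVec (S : Finset (Fin (n+1))) : inV n (eVec n S) := by
  constructor
  · have h : ∀ i ∈ Finset.univ, eVec n S i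
        = ((n:ℤ)+1) * (if i ∈ S then 1 else 0) - (S.card : ℤ) :=
      fun i _ => aux_eVec_apply S i
    rw [Finset.sum_congr rfl h, Finset.sum_sub_distrib, ← Finset.mul_sum]
    rw [Finset.sum_boole]
    simp [Finset.filter_mem_eq_inter, Finset.card_univ]
  · intro i j
    rw [aux_eVec_apply, aux_eVec_apply]
    refine ⟨(if i ∈ S then 1 else 0) - (if j ∈ S then 1 else 0), by ring⟩

lemma aux_height_spec {x : Fin (n+1) → ℤ} (hx : inV n x) {k : ℤ} :
    height n x = k ↔ maxC n x - minC n x = k * ((n:ℤ)+1) := by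
  obtain ⟨i, hi⟩ := aux_exists_maxC x
  obtain ⟨j, hj⟩ := aux_exists_minC x
  have hne : ((n:ℤ)+1) ≠ 0 := by positivity
  have hd : ((n:ℤ)+1) ∣ maxC n x - minC n x := by
    rw [← hi, ← hj]; exact hx.2 i j
  obtain ⟨c, hc⟩ := hd
  unfold height
  rw [hc, Int.mul_ediv_cancel_left _ hne]
  constructor
  · rintro rfl; ring
  · intro h
    have h2 : c * ((n:ℤ)+1) = k * ((n:ℤ)+1) := by
      have : ((n:ℤ)+1) * c = c * ((n:ℤ)+1) := by ring
      linarith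
    exact mul_right_cancel₀ hne h2

lemma aux_gap {N a b : ℤ} (hN : 0 < N) (hd : N ∣ b - a) (hlt : a < b) : a + N ≤ b := by
  obtain ⟨k, hk⟩ := hd
  have hk1 : 1 ≤ k := by nlinarith
  nlinarith

lemma aux_two_val {N d : ℤ} (hN : 0 < N) (hd : N ∣ d) (h0 : 0 ≤ d) (h1 : d ≤ N) :
    d = 0 ∨ d = N := by
  obtain ⟨k, hk⟩ := hd
  have hk0 : 0 ≤ k := by nlinarith
  have hk1 : k ≤ 1 := by nlinarith
  interval_cases k <;> omega

lemma aux_edge_drop {n m : ℕ} {X Y : Fin (n+1) → ℤ}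
    (hXY : isEdge n (Y - X))
    (hXg : maxC n X - minC n X = ((m:ℤ)+1) * ((n:ℤ)+1))
    (hYg : maxC n Y - minC n Y = (m:ℤ) * ((n:ℤ)+1)) :
    ∃ c : ℤ, (∀ i, Y i - X i = c ∨ Y i - X i = c + ((n:ℤ)+1)) ∧
      (∀ i, X i = maxC n X → Y i - X i = c) ∧
      (∀ i, X i = minC n X → Y i - X i = c + ((n:ℤ)+1)) := by
  have hN0 : (0:ℤ) < (n:ℤ)+1 := by positivity
  set c := minC n (Y - X) with hc
  have hEsub : ∀ i, (Y - X) i = Y i - X i := fun i => rfl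
  have htv : ∀ i, Y i - X i = c ∨ Y i - X i = c + ((n:ℤ)+1) := by
    intro i
    obtain ⟨j, hj⟩ := aux_exists_minC (Y - X)
    have hdvd : ((n:ℤ)+1) ∣ (Y - X) i - (Y - X) j := hXY.1.2 i j
    have h0 : 0 ≤ (Y - X) i - c := by
      have := aux_minC_le (Y - X) i; omega
    have h1 : (Y - X) i - c ≤ (n:ℤ)+1 := by
      have := aux_le_maxC (Y - X) i
      have := hXY.2
      omega
    rw [hj] at hdvd
    have := aux_two_val hN0 hdvd h0 h1
    rw [hEsub i] at *
    omega
  have hmulm : ((m:ℤ)+1) * ((n:ℤ)+1) = (m:ℤ) * ((n:ℤ)+1) + ((n:ℤ)+1) := by ring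
  refine ⟨c, htv, ?_, ?_⟩
  · intro i hi
    rcases htv i with h | h
    · exact h
    exfalso
    obtain ⟨j, hj⟩ := aux_exists_minC X
    have hYle : Y i - Y j ≤ (m:ℤ) * ((n:ℤ)+1) := by
      have h1 := aux_le_maxC Y i
      have h2 := aux_minC_le Y j
      omega
    have hej : c ≤ Y j - X j := by
      have := aux_minC_le (Y - X) j; rw [hEsub] at this; omega
    have hXij : X i - X j = ((m:ℤ)+1) * ((n:ℤ)+1) := by rw [hi, hj]; exact hXg
    have : Y i - Y j = (X i - X j) + ((Y i - X i) - (Y j - X j)) := by ring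
    rcases htv j with hj2 | hj2 <;> linarith
  · intro j hj
    rcases htv j with h | h
    swap
    · exact h
    exfalso
    obtain ⟨i, hi⟩ := aux_exists_maxC X
    have hYle : Y i - Y j ≤ (m:ℤ) * ((n:ℤ)+1) := by
      have h1 := aux_le_maxC Y i
      have h2 := aux_minC_le Y j
      omega
    have hXij : X i - X j = ((m:ℤ)+1) * ((n:ℤ)+1) := by rw [hi, hj]; exact hXg
    rcases htv i with hi2 | hi2 <;> linarith

end Aux

/-- quadrangle condition at the origin. -/
theorem stmt9 (n : ℕ) (hn : 1 ≤ n) (m : ℕ) (hm : 1 ≤ m)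
    (X Y Z : Fin (n+1) → ℤ) (hX : inV n X) (hY : inV n Y) (hZ : inV n Z)
    (hXY : isEdge n (Y - X)) (hXZ : isEdge n (Z - X))
    (hhX : height n X = (m : ℤ) + 1)
    (hhY : height n Y = (m : ℤ)) (hhZ : height n Z = (m : ℤ)) :
    ∃ W : Fin (n+1) → ℤ, inV n W ∧ isEdge n (W - Y) ∧ isEdge n (W - Z) ∧
      height n W = (m : ℤ) - 1 := by
  classical
  have hN0 : (0:ℤ) < (n:ℤ)+1 := by positivity
  have hXg : maxC n X - minC n X = ((m:ℤ)+1) * ((n:ℤ)+1) := (aux_height_spec hX).1 hhX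
  have hYg : maxC n Y - minC n Y = (m:ℤ) * ((n:ℤ)+1) := (aux_height_spec hY).1 hhY
  have hZg : maxC n Z - minC n Z = (m:ℤ) * ((n:ℤ)+1) := (aux_height_spec hZ).1 hhZ
  obtain ⟨cY, hYtv, hYmax, hYmin⟩ := aux_edge_drop hXY hXg hYg
  obtain ⟨cZ, hZtv, hZmax, hZmin⟩ := aux_edge_drop hXZ hXg hZg
  have hm1 : (1:ℤ) ≤ (m:ℤ) := by exact_mod_cast hm
  have hgapX : 2*((n:ℤ)+1) ≤ ((m:ℤ)+1) * ((n:ℤ)+1) := by nlinarith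
  have hMLne : minC n X < maxC n X := by nlinarith
  set L : Finset (Fin (n+1)) := Finset.univ.filter (fun i => X i = minC n X) with hLdef
  set Mt : Finset (Fin (n+1)) := Finset.univ.filter (fun i => X i = maxC n X) with hMdef
  have hmemL : ∀ i, i ∈ L ↔ X i = minC n X := fun i => by simp [hLdef]
  have hmemM : ∀ i, i ∈ Mt ↔ X i = maxC n X := fun i => by simp [hMdef]
  obtain ⟨i0, hi0⟩ := aux_exists_maxC X
  obtain ⟨j0, hj0⟩ := aux_exists_minC X
  have tri : ∀ i, X i = maxC n X ∨ X i = minC n X ∨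
      (minC n X + ((n:ℤ)+1) ≤ X i ∧ X i + ((n:ℤ)+1) ≤ maxC n X) := by
    intro i
    by_cases h1 : X i = maxC n X
    · exact Or.inl h1
    by_cases h2 : X i = minC n X
    · exact Or.inr (Or.inl h2)
    refine Or.inr (Or.inr ⟨?_, ?_⟩)
    · have hd : ((n:ℤ)+1) ∣ X i - minC n X := by rw [← hj0]; exact hX.2 i j0
      have hle := aux_minC_le X i
      exact aux_gap hN0 hd (lt_of_le_of_ne hle (Ne.symm h2))
    · have hd : ((n:ℤ)+1) ∣ maxC n X - X i := by rw [← hi0]; exact hX.2 i0 i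
      have hle := aux_le_maxC X i
      have := aux_gap hN0 hd (lt_of_le_of_ne hle h1)
      linarith
  set cW : ℤ := -(L.card : ℤ) - (((Finset.univ \ Mt).card : ℤ)) with hcW
  set W : Fin (n+1) → ℤ := X + eVec n L + eVec n (Finset.univ \ Mt) with hWdef
  have hWV : inV n W := aux_inV_add (aux_inV_add hX (aux_inV_eVec L)) (aux_inV_eVec _)
  have hWi : ∀ i, W i = X i
      + ((n:ℤ)+1) * ((if i ∈ L then 1 else 0) + (if i ∈ Mt then 0 else 1)) + cW := by
    intro i
    have e1 : W i = X i + eVec n L i + eVec n (Finset.univ \ Mt) i := rfl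
    rw [e1, aux_eVec_apply, aux_eVec_apply]
    by_cases hM : i ∈ Mt <;> by_cases hL : i ∈ L <;> simp [hM, hL, hcW] <;> ring
  have hWmaxi : ∀ i, X i = maxC n X → W i = maxC n X + cW := by
    intro i hi
    have hiM : i ∈ Mt := (hmemM i).2 hi
    have hiL : i ∉ L := by
      rw [hmemL]; intro h; rw [hi] at h; omega
    rw [hWi i, hi]; simp [hiM, hiL]
  have hWmini : ∀ i, X i = minC n X → W i = minC n X + 2*((n:ℤ)+1) + cW := by
    intro i hi
    have hiL : i ∈ L := (hmemL i).2 hi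
    have hiM : i ∉ Mt := by
      rw [hmemM]; intro h; rw [hi] at h; omega
    rw [hWi i, hi]; simp [hiM, hiL]; ring
  have hWmidi : ∀ i, minC n X + ((n:ℤ)+1) ≤ X i → X i + ((n:ℤ)+1) ≤ maxC n X →
      W i = X i + ((n:ℤ)+1) + cW := by
    intro i h1 h2
    have hiL : i ∉ L := by rw [hmemL]; intro h; omega
    have hiM : i ∉ Mt := by rw [hmemM]; intro h; omega
    rw [hWi i]; simp [hiM, hiL]
  have hWub : ∀ i, W i ≤ maxC n X + cW := by
    intro i
    rcases tri i with h | h | h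
    · rw [hWmaxi i h]
    · rw [hWmini i h]; linarith
    · rw [hWmidi i h.1 h.2]; linarith [h.2]
  have hWlb : ∀ i, minC n X + 2*((n:ℤ)+1) + cW ≤ W i := by
    intro i
    rcases tri i with h | h | h
    · rw [hWmaxi i h]; linarith
    · rw [hWmini i h]
    · rw [hWmidi i h.1 h.2]; linarith [h.1]
  have hWmax : maxC n W = maxC n X + cW := aux_maxC_eq hWub ⟨i0, hWmaxi i0 hi0⟩
  have hWmin : minC n W = minC n X + 2*((n:ℤ)+1) + cW :=
    aux_minC_eq hWlb ⟨j0, hWmini j0 hj0⟩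
  have hring : ((m:ℤ)+1)*((n:ℤ)+1) - 2*((n:ℤ)+1) = ((m:ℤ)-1)*((n:ℤ)+1) := by ring
  have hWh : height n W = (m:ℤ) - 1 :=
    (aux_height_spec hWV).2 (by rw [hWmax, hWmin]; linarith)
  have edgeW : ∀ (Q : Fin (n+1) → ℤ) (c : ℤ), inV n Q →
      (∀ i, Q i - X i = c ∨ Q i - X i = c + ((n:ℤ)+1)) →
      (∀ i, X i = maxC n X → Q i - X i = c) →
      (∀ i, X i = minC n X → Q i - X i = c + ((n:ℤ)+1)) →
      isEdge n (W - Q) := by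
    intro Q c hQ htv hqmax hqmin
    have hvals : ∀ i, W i - Q i = cW - c ∨ W i - Q i = cW - c + ((n:ℤ)+1) := by
      intro i
      rcases tri i with h | h | h
      · left; have h2 := hqmax i h; rw [hWmaxi i h]; linarith
      · right; have h2 := hqmin i h; rw [hWmini i h]; linarith
      · rw [hWmidi i h.1 h.2]
        rcases htv i with h2 | h2
        · right; linarith
        · left; linarith
    have hub : ∀ i, (W - Q) i ≤ cW - c + ((n:ℤ)+1) := by
      intro i; rcases hvals i with h | h <;> simp [Pi.sub_apply] <;> linarith
    have hlb : ∀ i, cW - c ≤ (W - Q) i := by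
      intro i; rcases hvals i with h | h <;> simp [Pi.sub_apply] <;> linarith
    have hmaxWQ : maxC n (W - Q) = cW - c + ((n:ℤ)+1) := by
      refine aux_maxC_eq hub ⟨j0, ?_⟩
      have h2 := hqmin j0 hj0
      have h3 := hWmini j0 hj0
      simp [Pi.sub_apply]; linarith
    have hminWQ : minC n (W - Q) = cW - c := by
      refine aux_minC_eq hlb ⟨i0, ?_⟩
      have h2 := hqmax i0 hi0
      have h3 := hWmaxi i0 hi0
      simp [Pi.sub_apply]; linarith
    exact ⟨aux_inV_sub hWV hQ, by rw [hmaxWQ, hminWQ]; ring⟩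
  exact ⟨W, hWV, edgeW Y cY hY hYtv hYmax hYmin, edgeW Z cZ hZ hZtv hZmax hZmin, hWh⟩
end

section
/- The graph G on V with edge-vector adjacency is connected: for any x, y ∈ V there is a finite path in G from x to y, of length (max(x−y) − min(x−y))/(n+1). -/
open Finset

lemma le_maxC (n : ℕ) (x : Fin (n+1) → ℤ) (i : Fin (n+1)) : x i ≤ maxC n x :=
  Finset.le_sup' x (Finset.mem_univ i)

lemma minC_le (n : ℕ) (x : Fin (n+1) → ℤ) (i : Fin (n+1)) : minC n x ≤ x i :=
  Finset.inf'_le x (Finset.mem_univ i)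

lemma walk_of_height (n : ℕ) : ∀ k : ℕ, ∀ x y : {x : Fin (n+1) → ℤ // inV n x},
    maxC n (x.1 - y.1) - minC n (x.1 - y.1) = (k : ℤ) * ((n : ℤ) + 1) →
    ∃ p : (G n).Walk x y, p.length = k := by
  intro k
  induction k with
  | zero =>
    intro x y h
    have hconst : ∀ i, (x.1 - y.1) i = maxC n (x.1 - y.1) := by
      intro i
      have h1 := le_maxC n (x.1 - y.1) i
      have h2 := minC_le n (x.1 - y.1) i
      simp only [Nat.cast_zero, zero_mul] at h
      omega
    have hsum : ∑ i, (x.1 - y.1) i = 0 := by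
      simp only [Pi.sub_apply, Finset.sum_sub_distrib, x.2.1, y.2.1, sub_zero]
    rw [Finset.sum_congr rfl (fun i _ => hconst i)] at hsum
    rw [Finset.sum_const, Finset.card_univ, Fintype.card_fin] at hsum
    have hM : maxC n (x.1 - y.1) = 0 := by
      have : ((n:ℤ)+1) * maxC n (x.1 - y.1) = 0 := by
        rw [← hsum]; push_cast; ring
      have hpos : (0:ℤ) < (n:ℤ)+1 := by positivity
      exact (mul_eq_zero.mp this).resolve_left (by omega)
    have hxy : x = y := by
      apply Subtype.ext; funext i
      have := hconst i
      rw [hM] at this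
      simpa [sub_eq_zero] using this
    subst hxy
    exact ⟨SimpleGraph.Walk.nil, rfl⟩
  | succ k ih =>
    intro x y h
    set d : Fin (n+1) → ℤ := x.1 - y.1 with hd
    obtain ⟨i0, -, hi0⟩ := Finset.exists_mem_eq_sup' (univ_nonempty) d
    obtain ⟨j0, -, hj0⟩ := Finset.exists_mem_eq_inf' (univ_nonempty) d
    have hMi0 : maxC n d = d i0 := hi0
    have hmj0 : minC n d = d j0 := hj0
    have hdiv : ∀ i j, ((n:ℤ)+1) ∣ d i - d j := by
      intro i j
      have h1 := x.2.2 i j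
      have h2 := y.2.2 i j
      have : d i - d j = (x.1 i - x.1 j) - (y.1 i - y.1 j) := by
        simp [hd]; ring
      rw [this]
      exact dvd_sub h1 h2
    have hMm : maxC n d - minC n d = ((k:ℤ)+1) * ((n:ℤ)+1) := by
      rw [h]; push_cast; ring
    have hpos : (0:ℤ) < (n:ℤ)+1 := by positivity
    have hMmpos : minC n d < maxC n d := by nlinarith [hMm]
    set S : Finset (Fin (n+1)) := univ.filter (fun i => d i = maxC n d) with hS
    have hi0S : i0 ∈ S := by simp [hS, hMi0.symm]
    have hj0S : j0 ∉ S := by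
      simp only [hS, Finset.mem_filter, Finset.mem_univ, true_and]
      omega
    set c : ℕ := S.card with hc
    have hc1 : 1 ≤ c := Finset.card_pos.mpr ⟨i0, hi0S⟩
    have hc2 : c ≤ n := by
      have hss : S ⊂ univ := Finset.ssubset_univ_iff.mpr (fun hS' => hj0S (hS' ▸ Finset.mem_univ j0))
      have := Finset.card_lt_card hss
      rw [Finset.card_univ, Fintype.card_fin] at this
      omega
    -- edge vector facts
    have heS : ∀ i ∈ S, eVec n S i = (n:ℤ) + 1 - c := fun i hi => by simp [eVec, hi]; exact hc.symm
    have heSc : ∀ i ∉ S, eVec n S i = -(c:ℤ) := fun i hi => by simp [eVec, hi]; exact hc.symm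
    have hcc : ((Sᶜ.card : ℕ) : ℤ) = (n:ℤ) + 1 - (c:ℤ) := by
      have h1 := Finset.card_compl S
      rw [Fintype.card_fin] at h1
      have h2 : c ≤ n + 1 := by omega
      omega
    have hsum_e : ∑ i, eVec n S i = 0 := by
      rw [← Finset.sum_add_sum_compl S,
          Finset.sum_congr rfl (fun i hi => heS i hi),
          Finset.sum_congr rfl (fun i hi => heSc i (by simpa using hi)),
          Finset.sum_const, Finset.sum_const, nsmul_eq_mul, nsmul_eq_mul, hcc]
      ring
    have hdiff_e : ∀ i j, ((n:ℤ)+1) ∣ eVec n S i - eVec n S j := by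
      intro i j
      by_cases hi : i ∈ S <;> by_cases hj : j ∈ S <;>
        simp only [eVec, hi, hj, if_pos, if_neg, if_true, if_false]
      · simp
      · exact ⟨1, by ring⟩
      · exact ⟨-1, by ring⟩
      · simp
    have hmax_e : maxC n (eVec n S) = (n:ℤ) + 1 - c := by
      apply le_antisymm
      · apply Finset.sup'_le
        intro i _
        by_cases hi : i ∈ S
        · rw [heS i hi]
        · rw [heSc i hi]; push_cast; omega
      · rw [← heS i0 hi0S]; exact le_maxC n _ i0
    have hmin_e : minC n (eVec n S) = -(c:ℤ) := by
      apply le_antisymm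
      · rw [← heSc j0 hj0S]; exact minC_le n _ j0
      · apply Finset.le_inf'
        intro i _
        by_cases hi : i ∈ S
        · rw [heS i hi]; push_cast; omega
        · rw [heSc i hi]
    have hedge : isEdge n (eVec n S) := by
      refine ⟨⟨hsum_e, hdiff_e⟩, ?_⟩
      rw [hmax_e, hmin_e]; ring
    -- the new vertex
    have hx'V : inV n (x.1 - eVec n S) := by
      constructor
      · simp only [Pi.sub_apply, Finset.sum_sub_distrib, x.2.1, hsum_e, sub_zero]
      · intro i j
        have : (x.1 - eVec n S) i - (x.1 - eVec n S) j
            = (x.1 i - x.1 j) - (eVec n S i - eVec n S j) := by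
          simp; ring
        rw [this]
        exact dvd_sub (x.2.2 i j) (hdiff_e i j)
    set x' : {x : Fin (n+1) → ℤ // inV n x} := ⟨x.1 - eVec n S, hx'V⟩ with hx'
    have hadj : (G n).Adj x x' := by
      show isEdge n (x'.1 - x.1)
      have : x'.1 - x.1 = -(eVec n S) := by
        funext i; simp [hx']
      rw [this]
      exact isEdge_neg hedge
    -- new difference vector
    have hd' : x'.1 - y.1 = d - eVec n S := by
      funext i; simp [hx', hd]; ring
    have hub : ∀ i, (d - eVec n S) i ≤ maxC n d - ((n:ℤ)+1) + c := by
      intro i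
      by_cases hi : i ∈ S
      · have : d i = maxC n d := by
          simpa [hS] using hi
        simp only [Pi.sub_apply, this, heS i hi]
        ring_nf; omega
      · have h1 : d i ≤ maxC n d := le_maxC n d i
        have h2 : d i ≠ maxC n d := by
          intro hEq
          exact hi (by simp [hS, hEq])
        obtain ⟨t, ht⟩ := hdiv i0 i
        rw [← hMi0] at ht
        have h4 : 0 < ((n:ℤ)+1) * t := by
          have := lt_of_le_of_ne h1 h2
          linarith
        have ht1 : 0 < t := by
          rcases mul_pos_iff.mp h4 with ⟨-, h⟩ | ⟨h, -⟩
          · exact h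
          · linarith
        have h3 : d i ≤ maxC n d - ((n:ℤ)+1) := by
          have h5 : ((n:ℤ)+1) * 1 ≤ ((n:ℤ)+1) * t :=
            mul_le_mul_of_nonneg_left (by omega) (le_of_lt hpos)
          linarith
        simp only [Pi.sub_apply, heSc i hi]
        omega
    have hlb : ∀ i, minC n d + c ≤ (d - eVec n S) i := by
      intro i
      by_cases hi : i ∈ S
      · have hdi : d i = maxC n d := by simpa [hS] using hi
        simp only [Pi.sub_apply, hdi, heS i hi]
        have : minC n d ≤ maxC n d - ((n:ℤ)+1) := by nlinarith [hMm]
        omega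
      · have := minC_le n d i
        simp only [Pi.sub_apply, heSc i hi]
        omega
    have hmax' : maxC n (d - eVec n S) = maxC n d - ((n:ℤ)+1) + c := by
      apply le_antisymm
      · exact Finset.sup'_le _ _ (fun i _ => hub i)
      · have : (d - eVec n S) i0 = maxC n d - ((n:ℤ)+1) + c := by
          simp only [Pi.sub_apply, ← hMi0, heS i0 hi0S]; ring
        rw [← this]
        exact le_maxC n _ i0
    have hmin' : minC n (d - eVec n S) = minC n d + c := by
      apply le_antisymm
      · have : (d - eVec n S) j0 = minC n d + c := by
          simp only [Pi.sub_apply, ← hmj0, heSc j0 hj0S]; ring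
        rw [← this]
        exact minC_le n _ j0
      · exact Finset.le_inf' _ _ (fun i _ => hlb i)
    have hih : maxC n (x'.1 - y.1) - minC n (x'.1 - y.1) = (k:ℤ) * ((n:ℤ)+1) := by
      rw [hd', hmax', hmin']
      have := hMm
      push_cast
      linarith
    obtain ⟨p, hp⟩ := ih x' y hih
    exact ⟨SimpleGraph.Walk.cons hadj p, by simp [hp]⟩

/-- G is connected; between any two vertices there is a path of
length (max(x−y) − min(x−y))/(n+1). -/
theorem stmt18 (n : ℕ) (hn : 1 ≤ n) (x y : {x : Fin (n+1) → ℤ // inV n x}) :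
    ∃ p : (G n).Walk x y,
      (p.length : ℤ) = (maxC n (x.1 - y.1) - minC n (x.1 - y.1)) / ((n : ℤ) + 1) := by
  set d : Fin (n+1) → ℤ := x.1 - y.1 with hd
  obtain ⟨i0, -, hi0⟩ := Finset.exists_mem_eq_sup' (univ_nonempty) d
  obtain ⟨j0, -, hj0⟩ := Finset.exists_mem_eq_inf' (univ_nonempty) d
  have hM0 : maxC n d = d i0 := hi0
  have hm0 : minC n d = d j0 := hj0
  have hdiv : ((n:ℤ)+1) ∣ maxC n d - minC n d := by
    rw [hM0, hm0]
    have h1 := x.2.2 i0 j0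
    have h2 := y.2.2 i0 j0
    have : d i0 - d j0 = (x.1 i0 - x.1 j0) - (y.1 i0 - y.1 j0) := by simp [hd]; ring
    rw [this]
    exact dvd_sub h1 h2
  have hnn : 0 ≤ maxC n d - minC n d := by
    have h1 := le_maxC n d i0
    have h2 := minC_le n d i0
    omega
  obtain ⟨t, ht⟩ := hdiv
  have hpos : (0:ℤ) < (n:ℤ)+1 := by positivity
  have ht0 : 0 ≤ t := by nlinarith
  have hk : maxC n d - minC n d = (t.toNat : ℤ) * ((n:ℤ)+1) := by
    rw [Int.toNat_of_nonneg ht0]; linarith [ht]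
  obtain ⟨p, hp⟩ := walk_of_height n t.toNat x y hk
  refine ⟨p, ?_⟩
  rw [hp, hk, Int.mul_ediv_cancel _ (by omega)]
end
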